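/- Let (X_n, A_n)_{n∈ℕ} be measurable spaces and (κ_n : ∏_{i≤n} X_i ⇝ X_{n+1})_{n∈ℕ} Markov kernels. For every a ∈ ℕ and every x ∈ ∏_{i≤a} X_i, the set function P_a(x,·) defined on measurable cylinders of ∏_{n>a} X_n by P_a(x, A × ∏_{n>b} X_n) := η_{a,b}(x, A) for A measurable in ∏_{a<i≤b} X_i is a well-defined additive content over the ring of measurable cylinders. -/

import Mathlib

open MeasureTheory ProbabilityTheory Preorder Filter
open scoped ENNReal ProbabilityTheory Topology

variable {X : ℕ → Type*} [∀ n, MeasurableSpace (X n)]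

/-- Canonical map gluing a trajectory up to time `b` with a point of `X (b + 1)` into a
trajectory up to time `b + 1`. -/
def IicProdSucc (b : ℕ) (p : (Π i : Finset.Iic b, X i) × X (b + 1)) :
    Π i : Finset.Iic (b + 1), X i :=
  fun i ↦ if h : i.1 ≤ b then p.1 ⟨i.1, Finset.mem_Iic.2 h⟩
    else cast (congrArg X (Nat.le_antisymm (Finset.mem_Iic.1 i.2)
      (Nat.lt_of_not_le h))).symm p.2

/-- The partial trajectory kernel `η_{a,b}` built from the kernels `κ n`: for `b ≤ a` it is the
deterministic kernel given by the restriction map, and `η_{a,b+1}` is obtained from `η_{a,b}` by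
composing with the product of the identity kernel and `κ b`. -/
noncomputable def partialTraj (κ : ∀ n, Kernel (Π i : Finset.Iic n, X i) (X (n + 1))) (a : ℕ) :
    (b : ℕ) → Kernel (Π i : Finset.Iic a, X i) (Π i : Finset.Iic b, X i)
  | 0 => Kernel.deterministic (frestrictLe₂ (Nat.zero_le a)) (measurable_frestrictLe₂ _)
  | b + 1 =>
    if h : b + 1 ≤ a then Kernel.deterministic (frestrictLe₂ h) (measurable_frestrictLe₂ h)
    else ((Kernel.id ×ₖ κ b) ∘ₖ partialTraj κ a b).map (IicProdSucc b)

/-- The kernel `η_{a,b} = κ_a ⊗ₖ … ⊗ₖ κ_{b-1}` from `Π i : Iic a, X i` to `Π i : Ioc a b, X i`,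
realized as the restriction to the coordinates in `(a, b]` of the partial trajectory kernel. -/
noncomputable def iocTraj (κ : ∀ n, Kernel (Π i : Finset.Iic n, X i) (X (n + 1))) (a b : ℕ) :
    Kernel (Π i : Finset.Iic a, X i) (Π i : Finset.Ioc a b, X i) :=
  (partialTraj κ a b).map
    (fun y (i : Finset.Ioc a b) ↦ y ⟨i.1, Finset.mem_Iic.2 (Finset.mem_Ioc.1 i.2).2⟩)

/-! ### Auxiliary: a generic additive content associated with a projective family -/

section Content

variable {ι : Type*} {α : ι → Type*} [∀ i, MeasurableSpace (α i)]
  {P : ∀ J : Finset ι, Measure (∀ j : J, α j)}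

omit [∀ i, MeasurableSpace (α i)] in
lemma cylRestrict_surjective [Nonempty (∀ i, α i)] (J : Finset ι) :
    Function.Surjective (J.restrict (π := α)) := by
  intro y
  obtain ⟨z⟩ : Nonempty (∀ i, α i) := inferInstance
  classical
  refine ⟨fun i ↦ if h : i ∈ J then y ⟨i, h⟩ else z i, ?_⟩
  funext j
  simp [Finset.restrict, j.2]

lemma cyl_exists_repr {u : Set (∀ i, α i)} (hu : u ∈ measurableCylinders α) {J : Finset ι}
    (hsub : measurableCylinders.finset hu ⊆ J)
    (hrs : Function.Surjective (J.restrict (π := α))) :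
    MeasurableSet (J.restrict '' u) ∧ u = cylinder J (J.restrict '' u) := by
  have h1 : u = cylinder J (Finset.restrict₂ hsub ⁻¹' measurableCylinders.set hu) := by
    conv_lhs => rw [measurableCylinders.eq_cylinder hu]
    rfl
  have h2 : J.restrict '' u = Finset.restrict₂ hsub ⁻¹' measurableCylinders.set hu := by
    conv_lhs => rw [h1]
    exact Set.image_preimage_eq _ hrs
  rw [h2]
  exact ⟨Finset.measurable_restrict₂ hsub (measurableCylinders.measurableSet hu), h1⟩

open scoped Classical in
/-- The set function associated with a family of measures on finite products. -/
noncomputable def contentFun (P : ∀ J : Finset ι, Measure (∀ j : J, α j))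
    (s : Set (∀ i, α i)) : ℝ≥0∞ :=
  if hs : s ∈ measurableCylinders α then
    P (measurableCylinders.finset hs) (measurableCylinders.set hs) else 0

lemma contentFun_cylinder (hP : IsProjectiveMeasureFamily P) (s : Finset ι)
    {S : Set (∀ j : s, α j)} (hS : MeasurableSet S) :
    contentFun P (cylinder s S) = P s S := by
  have h := cylinder_mem_measurableCylinders s S hS
  classical
  rw [contentFun]
  rw [dif_pos h]
  exact hP.congr_cylinder (measurableCylinders.measurableSet h) hS
    (measurableCylinders.eq_cylinder h).symm

/-- The additive content over measurable cylinders associated with a projective family of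
measures. -/
noncomputable def projContent (hP : IsProjectiveMeasureFamily P) [Nonempty (∀ i, α i)] :
    AddContent ℝ≥0∞ (measurableCylinders α) where
  toFun := contentFun P
  empty' := by
    have h0 : (∅ : Set (∀ i, α i)) = cylinder (∅ : Finset ι) ∅ := (cylinder_empty _).symm
    rw [h0, contentFun_cylinder hP _ MeasurableSet.empty]
    simp
  sUnion' := by
    classical
    intro I h_ss h_dis h_mem
    obtain ⟨J, hJ0, hsub⟩ : ∃ J : Finset ι, measurableCylinders.finset h_mem ⊆ J ∧
        ∀ u (hu : u ∈ I), measurableCylinders.finset (h_ss hu) ⊆ J :=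
      ⟨measurableCylinders.finset h_mem ∪
          I.attach.sup (fun u ↦ measurableCylinders.finset (h_ss u.2)),
        Finset.subset_union_left, fun u hu ↦ by
          have h2 := Finset.le_sup (f := fun u : {x // x ∈ I} ↦
            measurableCylinders.finset (h_ss u.2)) (I.mem_attach ⟨u, hu⟩)
          simp only [Finset.le_eq_subset] at h2
          exact h2.trans Finset.subset_union_right⟩
    have hrs : Function.Surjective (J.restrict (π := α)) := cylRestrict_surjective J
    have repr : ∀ u (hu : u ∈ I),
        MeasurableSet (J.restrict '' u) ∧ u = cylinder J (J.restrict '' u) :=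
      fun u hu ↦ cyl_exists_repr (h_ss hu) (hsub u hu) hrs
    have repr0 : MeasurableSet (J.restrict '' ⋃₀ (I : Set (Set (∀ i, α i)))) ∧
        ⋃₀ (I : Set (Set (∀ i, α i)))
          = cylinder J (J.restrict '' ⋃₀ (I : Set (Set (∀ i, α i)))) :=
      cyl_exists_repr h_mem hJ0 hrs
    have himg : J.restrict '' ⋃₀ (I : Set (Set (∀ i, α i))) = ⋃ u ∈ I, J.restrict '' u := by
      rw [Set.sUnion_eq_biUnion, Set.image_iUnion₂]
      rfl
    have hdisj : (↑I : Set (Set (∀ i, α i))).PairwiseDisjoint (fun u ↦ J.restrict '' u) := by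
      intro u hu v hv huv
      have h := h_dis hu hv huv
      rw [Function.onFun, Set.disjoint_left] at h ⊢
      rintro z ⟨w, hw, rfl⟩ ⟨w', hw', hz⟩
      have hwv : w ∈ v := by
        rw [(repr v hv).2]
        exact ⟨w', hw', hz⟩
      exact h hw hwv
    calc contentFun P (⋃₀ (I : Set (Set (∀ i, α i))))
        = P J (J.restrict '' ⋃₀ (I : Set (Set (∀ i, α i)))) := by
          conv_lhs => rw [repr0.2]
          exact contentFun_cylinder hP _ repr0.1
      _ = P J (⋃ u ∈ I, J.restrict '' u) := by rw [himg]
      _ = ∑ u ∈ I, P J (J.restrict '' u) :=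
          measure_biUnion_finset hdisj (fun u hu ↦ (repr u hu).1)
      _ = ∑ u ∈ I, contentFun P u := by
          refine Finset.sum_congr rfl fun u hu ↦ ?_
          conv_rhs => rw [(repr u hu).2]
          exact (contentFun_cylinder hP _ (repr u hu).1).symm

lemma projContent_apply (hP : IsProjectiveMeasureFamily P) [Nonempty (∀ i, α i)]
    (s : Set (∀ i, α i)) : projContent hP s = contentFun P s := rfl

end Content

/-! ### Auxiliary lemmas on `partialTraj` and `iocTraj` -/

lemma measurable_cast_nat {i j : ℕ} (e : i = j) :
    Measurable (fun p : X i ↦ cast (congrArg X e) p) := by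
  subst e; exact measurable_id

lemma measurable_iicProdSucc (b : ℕ) : Measurable (IicProdSucc (X := X) b) := by
  refine measurable_pi_lambda _ fun i ↦ ?_
  by_cases h : i.1 ≤ b
  · simp only [IicProdSucc, dif_pos h]
    exact measurable_fst.eval
  · simp only [IicProdSucc, dif_neg h]
    exact (measurable_cast_nat (Nat.le_antisymm (Nat.lt_of_not_le h)
      (Finset.mem_Iic.1 i.2))).comp measurable_snd

lemma partialTraj_le (κ : ∀ n, Kernel (Π i : Finset.Iic n, X i) (X (n + 1))) {a b : ℕ}
    (h : b ≤ a) :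
    partialTraj κ a b = Kernel.deterministic (frestrictLe₂ h) (measurable_frestrictLe₂ h) := by
  cases b with
  | zero => rfl
  | succ b => rw [partialTraj, dif_pos h]

instance instMarkovPartialTraj (κ : ∀ n, Kernel (Π i : Finset.Iic n, X i) (X (n + 1)))
    [∀ n, IsMarkovKernel (κ n)] (a b : ℕ) : IsMarkovKernel (partialTraj κ a b) := by
  induction b with
  | zero => rw [partialTraj]; infer_instance
  | succ b ih =>
    rw [partialTraj]
    split_ifs with h
    · infer_instance
    · exact Kernel.IsMarkovKernel.map _ (measurable_iicProdSucc b)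

lemma Measure.map_bind' {α β γ : Type*} [MeasurableSpace α] [MeasurableSpace β]
    [MeasurableSpace γ] (m : Measure α) {f : α → Measure β} (hf : Measurable f) {g : β → γ}
    (hg : Measurable g) :
    (m.bind f).map g = m.bind (fun a ↦ (f a).map g) := by
  have hdg : Measurable fun x : β ↦ Measure.dirac (g x) := by
    exact Measure.measurable_dirac.comp hg
  rw [← Measure.bind_dirac_eq_map _ hg, Measure.bind_bind hf.aemeasurable hdg.aemeasurable]
  simp_rw [Measure.bind_dirac_eq_map _ hg]

lemma partialTraj_map_apply (κ : ∀ n, Kernel (Π i : Finset.Iic n, X i) (X (n + 1)))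
    [∀ n, IsMarkovKernel (κ n)] {a b c : ℕ} (hbc : b ≤ c) (x : Π i : Finset.Iic a, X i) :
    (partialTraj κ a c x).map (frestrictLe₂ hbc) = partialTraj κ a b x := by
  induction c with
  | zero =>
    obtain rfl : b = 0 := Nat.le_zero.1 hbc
    have h0 : frestrictLe₂ (π := X) hbc = id := rfl
    rw [h0, Measure.map_id]
  | succ c ih =>
    by_cases hbc' : b ≤ c
    · rw [partialTraj]
      split_ifs with h
      · have hba : b ≤ a := hbc.trans h
        rw [partialTraj_le κ hba, Kernel.deterministic_apply, Kernel.deterministic_apply,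
          Measure.map_dirac' (measurable_frestrictLe₂ _)]
        rfl
      · rw [Kernel.map_apply _ (measurable_iicProdSucc c),
          Measure.map_map (measurable_frestrictLe₂ _) (measurable_iicProdSucc c)]
        have hcomp : frestrictLe₂ (π := X) hbc ∘ IicProdSucc c
            = (frestrictLe₂ hbc') ∘ (Prod.fst) := by
          funext p
          ext i
          have hic : i.1 ≤ c := le_trans (Finset.mem_Iic.1 i.2) hbc'
          simp [frestrictLe₂_apply, IicProdSucc, hic]
        rw [hcomp, ← Measure.map_map (measurable_frestrictLe₂ _) measurable_fst]
        have hfst : (((Kernel.id ×ₖ κ c) ∘ₖ partialTraj κ a c) x).map Prod.fst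
            = partialTraj κ a c x := by
          rw [Kernel.comp_apply, Measure.map_bind' _ (Kernel.id ×ₖ κ c).measurable
            measurable_fst]
          have heq : (fun y ↦ ((Kernel.id ×ₖ κ c) y).map Prod.fst)
              = fun y : (Π i : Finset.Iic c, X i) ↦ Measure.dirac y := by
            funext y
            rw [Kernel.prod_apply, Measure.map_fst_prod, measure_univ, one_smul,
              Kernel.id_apply]
          rw [heq, Measure.bind_dirac]
        rw [hfst]
        exact ih hbc'
    · obtain rfl : b = c + 1 := Nat.le_antisymm hbc (Nat.not_le.1 hbc')
      have h0 : frestrictLe₂ (π := X) hbc = id := rfl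
      rw [h0, Measure.map_id]

lemma iocTraj_map_apply (κ : ∀ n, Kernel (Π i : Finset.Iic n, X i) (X (n + 1)))
    [∀ n, IsMarkovKernel (κ n)] {a b c : ℕ} (hbc : b ≤ c) (x : Π i : Finset.Iic a, X i) :
    (iocTraj κ a c x).map (Finset.restrict₂ (Finset.Ioc_subset_Ioc_right hbc))
      = iocTraj κ a b x := by
  have hgc : Measurable (fun (y : Π i : Finset.Iic c, X i) (i : Finset.Ioc a c) ↦
      y ⟨i.1, Finset.mem_Iic.2 (Finset.mem_Ioc.1 i.2).2⟩) :=
    measurable_pi_lambda _ fun i ↦ measurable_pi_apply _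
  have hgb : Measurable (fun (y : Π i : Finset.Iic b, X i) (i : Finset.Ioc a b) ↦
      y ⟨i.1, Finset.mem_Iic.2 (Finset.mem_Ioc.1 i.2).2⟩) :=
    measurable_pi_lambda _ fun i ↦ measurable_pi_apply _
  rw [iocTraj, iocTraj, Kernel.map_apply _ hgc, Kernel.map_apply _ hgb,
    Measure.map_map (Finset.measurable_restrict₂ _) hgc]
  have hcomp : (Finset.restrict₂ (π := fun i : ℕ ↦ X i) (Finset.Ioc_subset_Ioc_right hbc)) ∘
      (fun (y : Π i : Finset.Iic c, X i) (i : Finset.Ioc a c) ↦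
        y ⟨i.1, Finset.mem_Iic.2 (Finset.mem_Ioc.1 i.2).2⟩)
      = (fun (y : Π i : Finset.Iic b, X i) (i : Finset.Ioc a b) ↦
          y ⟨i.1, Finset.mem_Iic.2 (Finset.mem_Ioc.1 i.2).2⟩) ∘ frestrictLe₂ hbc := rfl
  rw [hcomp, ← Measure.map_map hgb (measurable_frestrictLe₂ _), partialTraj_map_apply κ hbc]

/-! ### The projective family associated with `iocTraj` -/

section Glue

variable (κ : ∀ n, Kernel (Π i : Finset.Iic n, X i) (X (n + 1))) [∀ n, IsMarkovKernel (κ n)]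
  (a : ℕ) (x : Π i : Finset.Iic a, X i)

/-- The projective family of measures on the finite products of the `X n`, `n > a`, obtained
from the kernels `iocTraj κ a b` applied at `x`. -/
noncomputable def famP (J : Finset {n : ℕ // a < n}) : Measure (Π j : J, X j.1.1) :=
  (iocTraj κ a (J.sup fun j ↦ (j : ℕ)) x).map
    (fun y (j : J) ↦ y ⟨j.1.1, Finset.mem_Ioc.2 ⟨j.1.2, Finset.le_sup j.2⟩⟩)

lemma famP_eq (J : Finset {n : ℕ // a < n}) {b : ℕ} (hb : ∀ j ∈ J, (j : ℕ) ≤ b) :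
    famP κ a x J = (iocTraj κ a b x).map
      (fun y (j : J) ↦ y ⟨j.1.1, Finset.mem_Ioc.2 ⟨j.1.2, hb j.1 j.2⟩⟩) := by
  have hs : (J.sup fun j ↦ (j : ℕ)) ≤ b := Finset.sup_le hb
  have hm : Measurable (fun (y : Π i : Finset.Ioc a (J.sup fun j ↦ (j : ℕ)), X i) (j : J) ↦
      y ⟨j.1.1, Finset.mem_Ioc.2 ⟨j.1.2, Finset.le_sup j.2⟩⟩) :=
    measurable_pi_lambda _ fun j ↦ measurable_pi_apply _
  rw [famP, ← iocTraj_map_apply κ hs x,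
    Measure.map_map hm (Finset.measurable_restrict₂ _)]
  rfl

lemma isProjective_famP :
    IsProjectiveMeasureFamily (α := fun n : {n : ℕ // a < n} ↦ X n) (famP κ a x) := by
  intro I J hJI
  have hmI : Measurable (fun (y : Π i : Finset.Ioc a (I.sup fun j ↦ (j : ℕ)), X i) (j : I) ↦
      y ⟨j.1.1, Finset.mem_Ioc.2 ⟨j.1.2, Finset.le_sup j.2⟩⟩) :=
    measurable_pi_lambda _ fun j ↦ measurable_pi_apply _
  rw [famP_eq κ a x J (fun j hj ↦ Finset.le_sup (f := fun j : {n : ℕ // a < n} ↦ (j : ℕ))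
      (hJI hj)), famP,
    Measure.map_map (Finset.measurable_restrict₂ (X := fun n : {n : ℕ // a < n} ↦ X n) hJI) hmI]
  rfl

include κ x in
lemma nonempty_iic (n : ℕ) (h : a ≤ n) : Nonempty (Π i : Finset.Iic n, X i) := by
  refine Nat.le_induction ⟨x⟩ ?_ n h
  rintro n hn ⟨y⟩
  have hne : Nonempty (X (n + 1)) := by
    by_contra hempty
    rw [not_nonempty_iff] at hempty
    have h1 : (κ n y) Set.univ = 1 := measure_univ
    rw [Set.univ_eq_empty_iff.2 hempty, measure_empty] at h1
    exact zero_ne_one h1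
  obtain ⟨z⟩ := hne
  exact ⟨IicProdSucc n ⟨y, z⟩⟩

include κ x in
lemma nonempty_pi_gt : Nonempty (∀ n : {n : ℕ // a < n}, X n) := by
  have h : ∀ n : {n : ℕ // a < n}, Nonempty (X n) := by
    intro n
    obtain ⟨y⟩ := nonempty_iic κ a x n.1 (le_of_lt n.2)
    exact ⟨y ⟨n.1, Finset.mem_Iic.2 le_rfl⟩⟩
  exact ⟨fun n ↦ (h n).some⟩

end Glue

/-- The set function `P_a(x, ·)`, defined on measurable cylinders of `∏_{n > a} X_n` by
`P_a(x, A × ∏_{n > b} X_n) = η_{a,b}(x, A)`, is a well-defined additive content over the ring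
of measurable cylinders. -/
theorem exists_addContent_cylinders_eq_iocTraj
    (κ : ∀ n, Kernel (Π i : Finset.Iic n, X i) (X (n + 1))) [∀ n, IsMarkovKernel (κ n)]
    (a : ℕ) (x : Π i : Finset.Iic a, X i) :
    ∃ m : AddContent ℝ≥0∞ (measurableCylinders (fun n : {n : ℕ // a < n} ↦ X n)),
      ∀ (b : ℕ) (A : Set (Π i : Finset.Ioc a b, X i)), MeasurableSet A →
        m (cylinder ((Finset.Ioc a b).subtype (fun n ↦ a < n))
            ((fun (z : Π j : ((Finset.Ioc a b).subtype (fun n ↦ a < n)), X j.1.1)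
                (i : Finset.Ioc a b) ↦
              z ⟨⟨i.1, (Finset.mem_Ioc.1 i.2).1⟩, Finset.mem_subtype.2 i.2⟩) ⁻¹' A)) =
          iocTraj κ a b x A := by
  haveI : Nonempty (∀ n : {n : ℕ // a < n}, X n) := nonempty_pi_gt κ a x
  refine ⟨projContent (isProjective_famP κ a x), ?_⟩
  intro b A hA
  have hψ : Measurable (fun (z : Π j : ((Finset.Ioc a b).subtype (fun n ↦ a < n)), X j.1.1)
      (i : Finset.Ioc a b) ↦
        z ⟨⟨i.1, (Finset.mem_Ioc.1 i.2).1⟩, Finset.mem_subtype.2 i.2⟩) :=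
    measurable_pi_lambda _ fun i ↦ measurable_pi_apply _
  rw [projContent_apply, contentFun_cylinder (isProjective_famP κ a x) _ (hψ hA)]
  have hb : ∀ j ∈ (Finset.Ioc a b).subtype (fun n ↦ a < n), ((j : {n : ℕ // a < n}) : ℕ) ≤ b :=
    fun j hj ↦ (Finset.mem_Ioc.1 (Finset.mem_subtype.1 hj)).2
  rw [famP_eq κ a x _ hb]
  have hφ : Measurable (fun (y : Π i : Finset.Ioc a b, X i)
      (j : (Finset.Ioc a b).subtype (fun n ↦ a < n)) ↦
        y ⟨j.1.1, Finset.mem_Ioc.2 ⟨j.1.2, hb j.1 j.2⟩⟩) :=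
    measurable_pi_lambda _ fun j ↦ measurable_pi_apply _
  rw [Measure.map_apply hφ (hψ hA)]
  rfl
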